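/- Asymptotic convergence of fibers: the Euclidean distance between the fiber through w and the central fiber vanishes as the null-space parameter diverges, i.e., lim_{|λ| → ∞} ‖γ(λ) − γ₀(λ)‖ = 0, where γ₀(λ)_i = sign(λ b_i) √|λ b_i| is the parameterization of the zero-task fiber. -/

import Mathlib

open Filter Real

lemma sqrt_tendsto_atTop' : Filter.Tendsto Real.sqrt Filter.atTop Filter.atTop := by
  apply tendsto_atTop_atTop.2
  intro M
  refine ⟨max 0 M ^ 2, fun x hx => ?_⟩
  have h1 : max 0 M ≤ Real.sqrt x := Real.le_sqrt_of_sq_le hx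
  exact le_trans (le_max_right 0 M) h1

lemma sqrt_diff_le_aux (u v : ℝ) (hu : 0 ≤ u) (hv : 0 < v) :
    |Real.sqrt u - Real.sqrt v| ≤ |u - v| / Real.sqrt v := by
  have hsv : 0 < Real.sqrt v := Real.sqrt_pos.2 hv
  rw [le_div_iff₀ hsv]
  have h1 : (Real.sqrt u - Real.sqrt v) * (Real.sqrt u + Real.sqrt v) = u - v := by
    have h2 := Real.sq_sqrt hu
    have h3 := Real.sq_sqrt hv.le
    nlinarith
  have hnn : (0 : ℝ) ≤ Real.sqrt u + Real.sqrt v := by positivity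
  have h2 : |Real.sqrt u - Real.sqrt v| * Real.sqrt v
      ≤ |Real.sqrt u - Real.sqrt v| * (Real.sqrt u + Real.sqrt v) :=
    mul_le_mul_of_nonneg_left (by nlinarith [Real.sqrt_nonneg u]) (abs_nonneg _)
  have h3 : |Real.sqrt u - Real.sqrt v| * (Real.sqrt u + Real.sqrt v) = |u - v| := by
    rw [← abs_of_nonneg hnn, ← abs_mul, h1]
  linarith

lemma key_tendsto (c b : ℝ) (hb : b ≠ 0) :
    Filter.Tendsto (fun lam : ℝ =>
      Real.sign (c + lam * b) * Real.sqrt |c + lam * b| -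
        Real.sign (lam * b) * Real.sqrt |lam * b|)
      (Filter.atBot ⊔ Filter.atTop) (nhds 0) := by
  have habs : Tendsto (fun lam : ℝ => |lam|) (atBot ⊔ atTop) atTop :=
    tendsto_sup.2 ⟨tendsto_abs_atBot_atTop, tendsto_abs_atTop_atTop⟩
  have hbpos : 0 < |b| := abs_pos.2 hb
  have htb : Tendsto (fun lam : ℝ => |lam * b|) (atBot ⊔ atTop) atTop := by
    simpa [abs_mul] using habs.atTop_mul_const hbpos
  have hsq : Tendsto (fun lam : ℝ => Real.sqrt |lam * b|) (atBot ⊔ atTop) atTop :=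
    sqrt_tendsto_atTop'.comp htb
  have hg : Tendsto (fun lam : ℝ => |c| * (Real.sqrt |lam * b|)⁻¹)
      (atBot ⊔ atTop) (nhds 0) := by
    have := (tendsto_inv_atTop_zero.comp hsq).const_mul |c|
    simpa using this
  apply squeeze_zero_norm' _ hg
  have hev : ∀ᶠ lam : ℝ in atBot ⊔ atTop, |c| + 1 ≤ |lam * b| := by
    filter_upwards [habs.eventually (eventually_ge_atTop ((|c| + 1) / |b|))] with lam hl
    rw [abs_mul]
    calc |c| + 1 = ((|c| + 1) / |b|) * |b| := by field_simp
      _ ≤ |lam| * |b| := mul_le_mul_of_nonneg_right hl hbpos.le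
  filter_upwards [hev] with lam hl
  set t := lam * b with ht
  have htc : |c| < |t| := by linarith
  have hsign : Real.sign (c + t) * Real.sqrt |c + t| - Real.sign t * Real.sqrt |t|
      = Real.sign t * (Real.sqrt |c + t| - Real.sqrt |t|) := by
    rcases lt_trichotomy t 0 with htn' | h0 | htp
    · have h1 : c + t < 0 := by
        have : |c| < -t := by rwa [abs_of_neg htn'] at htc
        cases abs_cases c with
        | inl h => linarith [h.1]
        | inr h => linarith [h.1]
      rw [Real.sign_of_neg h1, Real.sign_of_neg htn']; ring
    · exfalso; rw [h0] at htc; simp at htc; linarith [abs_nonneg c]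
    · have h1 : 0 < c + t := by
        have : |c| < t := by rwa [abs_of_pos htp] at htc
        cases abs_cases c with
        | inl h => linarith [h.1]
        | inr h => linarith [h.1]
      rw [Real.sign_of_pos h1, Real.sign_of_pos htp]; ring
  rw [hsign]
  have htpos : 0 < |t| := lt_of_le_of_lt (abs_nonneg c) htc
  have hbound := sqrt_diff_le_aux |c + t| |t| (abs_nonneg _) htpos
  have habsdiff : |(|c + t| - |t|)| ≤ |c| := by
    have h := abs_abs_sub_abs_le_abs_sub (c + t) t
    simpa using h
  have hsgn1 : |Real.sign t| ≤ 1 := by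
    rcases lt_trichotomy t 0 with h | h | h
    · rw [Real.sign_of_neg h]; simp
    · rw [h]; simp
    · rw [Real.sign_of_pos h]; simp
  have hsqp : 0 < Real.sqrt |t| := Real.sqrt_pos.2 htpos
  have hbound2 : abs (Real.sqrt |c + t| - Real.sqrt |t|) ≤ |c| / Real.sqrt |t| :=
    le_trans hbound (div_le_div_of_nonneg_right habsdiff hsqp.le)
  calc ‖Real.sign t * (Real.sqrt |c + t| - Real.sqrt |t|)‖
      = |Real.sign t| * abs (Real.sqrt |c + t| - Real.sqrt |t|) := by
        rw [Real.norm_eq_abs, abs_mul]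
    _ ≤ 1 * (|c| / Real.sqrt |t|) :=
        mul_le_mul hsgn1 hbound2 (abs_nonneg _) zero_le_one
    _ = |c| * (Real.sqrt |t|)⁻¹ := by ring

/-- Asymptotic convergence of fibers: the Euclidean distance between the fiber
through w and the central fiber vanishes as the null-space parameter diverges. -/
theorem stmt_2 (m : ℕ) (hm : 1 ≤ m)
    (A : Matrix (Fin m) (Fin (m + 1)) ℝ)
    (f : (Fin (m + 1) → ℝ) → Fin m → ℝ)
    (hf : ∀ v j, f v j = ∑ i, A j i * (v i * |v i|))
    (b : Fin (m + 1) → ℝ) (hb0 : b ≠ 0)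
    (hbker : ∀ j, ∑ i, A j i * b i = 0)
    (hbi : ∀ i, b i ≠ 0)
    (w : Fin m → ℝ) (x₀ : Fin (m + 1) → ℝ)
    (hx₀ : ∀ j, ∑ i, A j i * x₀ i = w j)
    (γ : ℝ → Fin (m + 1) → ℝ)
    (hγ : ∀ lam i, γ lam i =
      Real.sign (x₀ i + lam * b i) * Real.sqrt |x₀ i + lam * b i|)
    (γ₀ : ℝ → Fin (m + 1) → ℝ)
    (hγ₀ : ∀ lam i, γ₀ lam i = Real.sign (lam * b i) * Real.sqrt |lam * b i|) :
    Filter.Tendsto (fun lam : ℝ => Real.sqrt (∑ i, (γ lam i - γ₀ lam i) ^ 2))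
      (Filter.atBot ⊔ Filter.atTop) (nhds 0) := by
  have hsum : Tendsto (fun lam : ℝ => ∑ i, (γ lam i - γ₀ lam i) ^ 2)
      (atBot ⊔ atTop) (nhds 0) := by
    have h0 : (0 : ℝ) = ∑ _i : Fin (m + 1), (0 : ℝ) := by simp
    rw [h0]
    apply tendsto_finset_sum
    intro i _
    have hkey := key_tendsto (x₀ i) (b i) (hbi i)
    have h2 : Tendsto (fun lam : ℝ => (γ lam i - γ₀ lam i) ^ 2) (atBot ⊔ atTop)
        (nhds (0 ^ 2)) := by
      apply Tendsto.pow
      simpa only [hγ, hγ₀] using hkey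
    simpa using h2
  have h3 := (Real.continuous_sqrt.tendsto 0).comp hsum
  simpa [Function.comp_def] using h3
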